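/- arXiv:1502.07616 — 3 statements merged into one kernel-verified Lean document; each statement's English description precedes it below -/
import Mathlib

section
/- The Borel measure ν on [0,1] with density ξ with respect to Lebesgue measure, dν(x) = ξ(x) dx, is a T-invariant probability measure: ν([0,1]) = 1 and ν(T⁻¹(A)) = ν(A) for every Borel set A ⊆ [0,1]. -/
open MeasureTheory

/-- The Gauss map `T(x) = 1/x − ⌊1/x⌋` for `x ≠ 0`, `T(0) = 0`. -/
noncomputable def gaussMap (x : ℝ) : ℝ := if x = 0 then 0 else Int.fract (1 / x)

/-- `ξ(x) = 1/((log 2)(1+x))`, the density of the Gauss measure. -/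
noncomputable def xi (x : ℝ) : ℝ := 1 / (Real.log 2 * (1 + x))

/-- The Gauss measure `dν = ξ dx` on `[0,1]`. -/
noncomputable def gaussMeasure : Measure ℝ :=
  (volume.restrict (Set.Icc (0:ℝ) 1)).withDensity fun x => ENNReal.ofReal (xi x)

lemma log2_pos : 0 < Real.log 2 := Real.log_pos one_lt_two

lemma measurable_gaussMap : Measurable gaussMap := by
  unfold gaussMap
  exact Measurable.ite (MeasurableSet.singleton 0 |>.congr (by ext x; simp)) measurable_const
    ((measurable_const.div measurable_id).fract)

lemma gaussMap_nonneg (x : ℝ) : 0 ≤ gaussMap x := by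
  unfold gaussMap; split
  · exact le_refl 0
  · exact Int.fract_nonneg _

lemma gaussMap_lt_one (x : ℝ) : gaussMap x < 1 := by
  unfold gaussMap; split
  · norm_num
  · exact Int.fract_lt_one _

lemma nu_null {B : Set ℝ} (h : volume (B ∩ Set.Icc (0:ℝ) 1) = 0) : gaussMeasure B = 0 := by
  refine (withDensity_absolutelyContinuous _ _) ?_
  rw [Measure.restrict_apply' measurableSet_Icc]
  exact h

instance : NullSingletonClass gaussMeasure :=
  ⟨fun x => nu_null (measure_mono_null Set.inter_subset_left Real.volume_singleton)⟩

lemma nu_inter_Ioc {B : Set ℝ} (hB : MeasurableSet B) :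
    gaussMeasure B = gaussMeasure (B ∩ Set.Ioc (0:ℝ) 1) := by
  have : gaussMeasure B = gaussMeasure (B ∩ Set.Ioc (0:ℝ) 1) + gaussMeasure (B \ Set.Ioc (0:ℝ) 1) :=
    (measure_inter_add_diff B measurableSet_Ioc).symm
  rw [this]
  have h0 : gaussMeasure (B \ Set.Ioc (0:ℝ) 1) = 0 := by
    apply nu_null
    refine measure_mono_null (fun x hx => ?_) (Real.volume_singleton (a := 0))
    obtain ⟨⟨-, hnot⟩, h0, h1⟩ := hx
    simp only [Set.mem_Ioc, not_and, not_le] at hnot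
    simp only [Set.mem_singleton_iff]
    rcases lt_or_eq_of_le h0 with h | h
    · exact absurd h1 (not_le.mpr (hnot h))
    · exact h.symm
  rw [h0, add_zero]

lemma xi_integral (u v : ℝ) (hu : 0 ≤ u) (huv : u ≤ v) :
    ∫ x in u..v, xi x = (Real.log (1+v) - Real.log (1+u)) / Real.log 2 := by
  have hcont : ContinuousOn xi (Set.uIcc u v) := by
    apply ContinuousOn.div continuousOn_const
      ((continuous_const.mul (continuous_const.add continuous_id)).continuousOn)
    intro x hx
    rw [Set.uIcc_of_le huv] at hx
    have : (0:ℝ) < 1 + x := by have := hx.1; linarith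
    exact ne_of_gt (mul_pos log2_pos this)
  have hderiv : ∀ x ∈ Set.uIcc u v,
      HasDerivAt (fun y => Real.log (1+y) / Real.log 2) (xi x) x := by
    intro x hx
    rw [Set.uIcc_of_le huv] at hx
    have hx0 : (0:ℝ) < 1 + x := by have := hx.1; linarith
    have h1 : HasDerivAt (fun y : ℝ => 1 + y) 1 x := (hasDerivAt_id x).const_add 1
    have h2 : HasDerivAt (fun y => Real.log (1+y)) ((1+x)⁻¹ * 1) x :=
      (Real.hasDerivAt_log (ne_of_gt hx0)).comp x h1
    have h3 := h2.div_const (Real.log 2)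
    refine h3.congr_deriv ?_
    unfold xi
    field_simp
  rw [intervalIntegral.integral_eq_sub_of_hasDerivAt hderiv (hcont.intervalIntegrable)]
  ring

lemma nu_Ioc {u v : ℝ} (hu : 0 ≤ u) (huv : u ≤ v) (hv : v ≤ 1) :
    gaussMeasure (Set.Ioc u v) =
      ENNReal.ofReal ((Real.log (1+v) - Real.log (1+u)) / Real.log 2) := by
  unfold gaussMeasure
  rw [withDensity_apply _ measurableSet_Ioc, Measure.restrict_restrict measurableSet_Ioc,
    Set.inter_eq_self_of_subset_left (Set.Ioc_subset_Icc_self.trans (Set.Icc_subset_Icc hu hv))]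
  have hsub : Set.Ioc u v ⊆ Set.Icc u v := Set.Ioc_subset_Icc_self
  have hint : IntegrableOn xi (Set.Ioc u v) := by
    apply (ContinuousOn.integrableOn_Icc ?_).mono_set hsub
    apply ContinuousOn.div continuousOn_const
      ((continuous_const.mul (continuous_const.add continuous_id)).continuousOn)
    intro x hx
    have : (0:ℝ) < 1 + x := by have := hx.1; linarith
    exact ne_of_gt (mul_pos log2_pos this)
  have hnn : 0 ≤ᵐ[volume.restrict (Set.Ioc u v)] xi := by
    filter_upwards [ae_restrict_mem measurableSet_Ioc] with x hx
    unfold xi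
    have : (0:ℝ) < 1 + x := by have := hx.1; linarith
    positivity
  rw [← ofReal_integral_eq_lintegral_ofReal hint hnn,
    ← intervalIntegral.integral_of_le huv, xi_integral u v hu huv]

lemma nu_Icc {u v : ℝ} (hu : 0 ≤ u) (huv : u ≤ v) (hv : v ≤ 1) :
    gaussMeasure (Set.Icc u v) =
      ENNReal.ofReal ((Real.log (1+v) - Real.log (1+u)) / Real.log 2) := by
  rw [← measure_congr (Ioc_ae_eq_Icc (μ := gaussMeasure) (a := u) (b := v))]
  exact nu_Ioc hu huv hv

lemma nu_total : gaussMeasure (Set.Icc (0:ℝ) 1) = 1 := by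
  rw [nu_Icc le_rfl zero_le_one le_rfl]
  norm_num [Real.log_one, div_self (ne_of_gt log2_pos)]

lemma nu_Iic {a : ℝ} (h0 : 0 ≤ a) (h1 : a ≤ 1) :
    gaussMeasure (Set.Iic a) = ENNReal.ofReal (Real.log (1+a) / Real.log 2) := by
  rw [nu_inter_Ioc measurableSet_Iic]
  have : Set.Iic a ∩ Set.Ioc (0:ℝ) 1 = Set.Ioc 0 a := by
    ext x
    simp only [Set.mem_inter_iff, Set.mem_Iic, Set.mem_Ioc]
    constructor
    · rintro ⟨hxa, hx0, -⟩; exact ⟨hx0, hxa⟩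
    · rintro ⟨hx0, hxa⟩; exact ⟨hxa, hx0, hxa.trans h1⟩
  rw [this, nu_Ioc le_rfl h0 h1]
  norm_num [Real.log_one]

/-- decomposition of the preimage of `Iic a` under the Gauss map inside `(0,1]`. -/
lemma preimage_decomp {a : ℝ} (h0 : 0 ≤ a) (h1 : a < 1) :
    gaussMap ⁻¹' Set.Iic a ∩ Set.Ioc (0:ℝ) 1 =
      ⋃ n : ℕ, Set.Icc (1/((n:ℝ)+1+a)) (1/((n:ℝ)+1)) := by
  ext x
  simp only [Set.mem_inter_iff, Set.mem_preimage, Set.mem_Iic, Set.mem_Ioc, Set.mem_iUnion,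
    Set.mem_Icc]
  constructor
  · rintro ⟨hT, hx0, hx1⟩
    have hxne : x ≠ 0 := ne_of_gt hx0
    rw [gaussMap, if_neg hxne] at hT
    have hinv1 : (1:ℝ) ≤ 1 / x := by
      rw [le_div_iff₀ hx0]; linarith
    have hfl : (1:ℤ) ≤ ⌊1/x⌋ := by exact_mod_cast Int.le_floor.mpr (by exact_mod_cast hinv1)
    set m : ℤ := ⌊1/x⌋ with hm
    obtain ⟨k, hk⟩ : ∃ k : ℕ, m = (k:ℤ) + 1 := ⟨(m - 1).toNat, by omega⟩
    refine ⟨k, ?_, ?_⟩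
    · have hle : 1/x ≤ (k:ℝ) + 1 + a := by
        have := hT
        rw [Int.fract] at this
        have : 1/x - (m:ℝ) ≤ a := this
        have hmr : (m:ℝ) = (k:ℝ) + 1 := by exact_mod_cast hk
        linarith [hmr ▸ this]
      have hpos : (0:ℝ) < (k:ℝ) + 1 + a := by positivity
      rw [div_le_iff₀ hpos]
      rw [div_le_iff₀ hx0] at hle
      linarith
    · have hge : (k:ℝ) + 1 ≤ 1/x := by
        have := Int.floor_le (1/x)
        have hmr : (m:ℝ) = (k:ℝ) + 1 := by exact_mod_cast hk
        linarith [hmr ▸ this]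
      rw [le_div_iff₀ hx0] at hge
      rw [le_div_iff₀ (by positivity : (0:ℝ) < (k:ℝ)+1)]
      linarith
  · rintro ⟨n, hl, hu⟩
    have hn1 : (0:ℝ) < (n:ℝ) + 1 := by positivity
    have hna : (0:ℝ) < (n:ℝ) + 1 + a := by positivity
    have hx0 : 0 < x := lt_of_lt_of_le (by positivity) hl
    have hxne : x ≠ 0 := ne_of_gt hx0
    have hinvl : (n:ℝ) + 1 ≤ 1/x := by
      rw [le_div_iff₀ hx0]
      rw [le_div_iff₀ hn1] at hu
      linarith
    have hinvu : 1/x ≤ (n:ℝ) + 1 + a := by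
      rw [div_le_iff₀ hx0]
      rw [div_le_iff₀ hna] at hl
      nlinarith
    have hfl : ⌊1/x⌋ = (n:ℤ) + 1 := by
      rw [Int.floor_eq_iff]
      push_cast
      exact ⟨hinvl, by linarith⟩
    refine ⟨?_, hx0, ?_⟩
    · rw [gaussMap, if_neg hxne, Int.fract, hfl]
      push_cast
      linarith
    · calc x ≤ 1/((n:ℝ)+1) := hu
        _ ≤ 1 := by rw [div_le_one hn1]; linarith

lemma tsum_telescope {a : ℝ} (h0 : 0 ≤ a) :
    ∑' n : ℕ, ENNReal.ofReal
        ((Real.log (1 + 1/((n:ℝ)+1)) - Real.log (1 + 1/((n:ℝ)+1+a))) / Real.log 2)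
      = ENNReal.ofReal (Real.log (1+a) / Real.log 2) := by
  set d : ℕ → ℝ := fun k => Real.log ((k:ℝ) + a) - Real.log (k:ℝ) with hd
  set t : ℕ → ℝ := fun n =>
    (Real.log (1 + 1/((n:ℝ)+1)) - Real.log (1 + 1/((n:ℝ)+1+a))) / Real.log 2 with ht
  have claimA : ∀ n : ℕ, t n = (d (n+1) - d (n+2)) / Real.log 2 := by
    intro n
    have hm : (0:ℝ) < (n:ℝ) + 1 := by positivity
    have hma : (0:ℝ) < (n:ℝ) + 1 + a := by positivity
    have e1 : 1 + 1/((n:ℝ)+1) = ((n:ℝ)+1+1) / ((n:ℝ)+1) := by field_simp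
    have e2 : 1 + 1/((n:ℝ)+1+a) = ((n:ℝ)+1+1+a) / ((n:ℝ)+1+a) := by field_simp; ring
    simp only [ht, hd, e1, e2]
    rw [Real.log_div (by positivity) (ne_of_gt hm), Real.log_div (by positivity) (ne_of_gt hma)]
    push_cast
    ring_nf
  have tnonneg : ∀ n : ℕ, 0 ≤ t n := by
    intro n
    have hm : (0:ℝ) < (n:ℝ) + 1 := by positivity
    apply div_nonneg _ log2_pos.le
    have h1 : 1 + 1/((n:ℝ)+1+a) ≤ 1 + 1/((n:ℝ)+1) := by
      have := one_div_le_one_div_of_le hm (by linarith : (n:ℝ)+1 ≤ (n:ℝ)+1+a)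
      linarith
    have h2 : (0:ℝ) < 1 + 1/((n:ℝ)+1+a) := by positivity
    linarith [Real.log_le_log h2 h1]
  have claimC : Filter.Tendsto d Filter.atTop (nhds 0) := by
    have h1 : Filter.Tendsto (fun k : ℕ => 1 + a/(k:ℝ)) Filter.atTop (nhds 1) := by
      have := tendsto_const_nhds (x := (1:ℝ)) (f := Filter.atTop (α := ℕ))
        |>.add (tendsto_const_div_atTop_nhds_zero_nat a)
      simpa using this
    have h2 : Filter.Tendsto (fun k : ℕ => Real.log (1 + a/(k:ℝ))) Filter.atTop (nhds 0) := by
      have := (Real.continuousAt_log (by norm_num : (1:ℝ) ≠ 0)).tendsto.comp h1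
      simpa [Real.log_one, Function.comp_def] using this
    apply h2.congr'
    filter_upwards [Filter.eventually_ge_atTop 1] with k hk
    have hk0 : (0:ℝ) < (k:ℝ) := by exact_mod_cast hk
    rw [hd]
    simp only
    rw [show 1 + a/(k:ℝ) = ((k:ℝ)+a)/(k:ℝ) by field_simp,
      Real.log_div (by positivity) (ne_of_gt hk0)]
  have key := ENNReal.tendsto_nat_tsum (fun n => ENNReal.ofReal (t n))
  have eqN : ∀ N : ℕ, ∑ n ∈ Finset.range N, ENNReal.ofReal (t n)
      = ENNReal.ofReal ((d 1 - d (N+1)) / Real.log 2) := by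
    intro N
    rw [← ENNReal.ofReal_sum_of_nonneg (fun n _ => tnonneg n)]
    congr 1
    calc ∑ n ∈ Finset.range N, t n
        = ∑ n ∈ Finset.range N, (d (n+1) - d (n+1+1)) / Real.log 2 := by
          apply Finset.sum_congr rfl
          intro n _
          rw [claimA n]
      _ = (∑ n ∈ Finset.range N, (d (n+1) - d (n+1+1))) / Real.log 2 := by
          rw [Finset.sum_div]
      _ = (d 1 - d (N+1)) / Real.log 2 := by
          rw [Finset.sum_range_sub' (fun i => d (i+1)) N]
  have lim2 : Filter.Tendsto (fun N : ℕ => ENNReal.ofReal ((d 1 - d (N+1)) / Real.log 2))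
      Filter.atTop (nhds (ENNReal.ofReal (d 1 / Real.log 2))) := by
    apply (ENNReal.continuous_ofReal.tendsto _).comp
    have := (tendsto_const_nhds (x := d 1) (f := Filter.atTop (α := ℕ))).sub
      (claimC.comp (Filter.tendsto_add_atTop_nat 1))
    have h3 := this.div_const (Real.log 2)
    simpa using h3
  have key2 : Filter.Tendsto (fun N : ℕ => ENNReal.ofReal ((d 1 - d (N+1)) / Real.log 2))
      Filter.atTop (nhds (∑' n : ℕ, ENNReal.ofReal (t n))) := by
    apply key.congr eqN
  have := tendsto_nhds_unique key2 lim2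
  rw [this]
  congr 1
  rw [hd]
  norm_num

lemma nu_preimage_Iic {a : ℝ} (h0 : 0 ≤ a) (h1 : a < 1) :
    gaussMeasure (gaussMap ⁻¹' Set.Iic a) = ENNReal.ofReal (Real.log (1+a) / Real.log 2) := by
  have hdisj : Pairwise (Function.onFun Disjoint
      (fun n : ℕ => Set.Icc (1/((n:ℝ)+1+a)) (1/((n:ℝ)+1)))) := by
    have key : ∀ i j : ℕ, i < j →
        Disjoint (Set.Icc (1/((i:ℝ)+1+a)) (1/((i:ℝ)+1)))
          (Set.Icc (1/((j:ℝ)+1+a)) (1/((j:ℝ)+1))) := by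
      intro i j hij
      apply Set.disjoint_left.mpr
      rintro x ⟨hxl, -⟩ ⟨-, hxu⟩
      have hcmp : (1:ℝ)/((j:ℝ)+1) < 1/((i:ℝ)+1+a) := by
        apply one_div_lt_one_div_of_lt (by positivity)
        have : (i:ℝ) + 1 ≤ (j:ℝ) := by exact_mod_cast hij
        linarith
      linarith
    intro i j hij
    rcases hij.lt_or_gt with h | h
    · exact key i j h
    · exact (key j i h).symm
  rw [nu_inter_Ioc (measurable_gaussMap measurableSet_Iic), preimage_decomp h0 h1,
    measure_iUnion hdisj (fun n => measurableSet_Icc)]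
  have hterm : ∀ n : ℕ, gaussMeasure (Set.Icc (1/((n:ℝ)+1+a)) (1/((n:ℝ)+1)))
      = ENNReal.ofReal
        ((Real.log (1 + 1/((n:ℝ)+1)) - Real.log (1 + 1/((n:ℝ)+1+a))) / Real.log 2) := by
    intro n
    have hm : (0:ℝ) < (n:ℝ) + 1 := by positivity
    apply nu_Icc
    · positivity
    · exact one_div_le_one_div_of_le hm (by linarith)
    · rw [div_le_one hm]; linarith [Nat.cast_nonneg (α := ℝ) n]
  rw [tsum_congr hterm]
  exact tsum_telescope h0

instance : IsFiniteMeasure gaussMeasure := by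
  constructor
  rw [nu_inter_Ioc MeasurableSet.univ, Set.univ_inter, nu_Ioc le_rfl zero_le_one le_rfl]
  exact ENNReal.ofReal_lt_top

lemma gaussMeasure_map_eq : gaussMeasure.map gaussMap = gaussMeasure := by
  haveI : IsFiniteMeasure (gaussMeasure.map gaussMap) := by
    constructor
    rw [Measure.map_apply measurable_gaussMap MeasurableSet.univ, Set.preimage_univ]
    exact measure_lt_top _ _
  refine Measure.ext_of_Iic _ _ (fun a => ?_)
  rw [Measure.map_apply measurable_gaussMap measurableSet_Iic]
  rcases lt_or_ge a 0 with ha | ha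
  · have h1 : gaussMap ⁻¹' Set.Iic a = ∅ := by
      ext x
      simp only [Set.mem_preimage, Set.mem_Iic, Set.mem_empty_iff_false, iff_false, not_le]
      exact lt_of_lt_of_le ha (gaussMap_nonneg x)
    have h2 : gaussMeasure (Set.Iic a) = 0 := by
      apply nu_null
      have he : Set.Iic a ∩ Set.Icc (0:ℝ) 1 = ∅ := by
        ext x
        simp only [Set.mem_inter_iff, Set.mem_Iic, Set.mem_Icc, Set.mem_empty_iff_false, iff_false,
          not_and]
        intro hx1 hx2
        linarith
      rw [he, measure_empty]
    rw [h1, h2, measure_empty]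
  rcases lt_or_ge a 1 with ha1 | ha1
  · rw [nu_preimage_Iic ha ha1, nu_Iic ha ha1.le]
  · have h1 : gaussMap ⁻¹' Set.Iic a = Set.univ := by
      ext x
      simp only [Set.mem_preimage, Set.mem_Iic, Set.mem_univ, iff_true]
      exact le_trans (gaussMap_lt_one x).le ha1
    have h2 : gaussMeasure (Set.Iic a) = gaussMeasure Set.univ := by
      rw [nu_inter_Ioc measurableSet_Iic, nu_inter_Ioc MeasurableSet.univ, Set.univ_inter]
      congr 1
      exact Set.inter_eq_self_of_subset_right (fun x hx => le_trans hx.2 ha1)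
    rw [h1, h2]

theorem gaussMeasure_invariant_probability :
    gaussMeasure (Set.Icc (0:ℝ) 1) = 1 ∧
    ∀ A : Set ℝ, MeasurableSet A → A ⊆ Set.Icc (0:ℝ) 1 →
      gaussMeasure (gaussMap ⁻¹' A) = gaussMeasure A := by
  refine ⟨nu_total, fun A hA _ => ?_⟩
  rw [← Measure.map_apply measurable_gaussMap hA, gaussMeasure_map_eq]
end

section
/- For every f ∈ L¹([0,1]) (with respect to Lebesgue measure), the series (Lf)(x) := Σ_{n=1}^∞ (x+n)^{−2} f(1/(x+n)) converges absolutely for Lebesgue-almost every x ∈ [0,1], the function Lf belongs to L¹([0,1]) with ‖Lf‖_{L¹} ≤ ‖f‖_{L¹}, and ∫₀¹ (Lf)(x) dx = ∫₀¹ f(x) dx. -/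
open MeasureTheory

/-- The Gauss–Kuzmin–Wirsing transfer operator
`(L f)(x) = Σ_{n≥1} (x+n)^{-2} f(1/(x+n))`. -/
noncomputable def transferOp (f : ℝ → ℂ) (x : ℝ) : ℂ :=
  ∑' n : ℕ, ((((x + (n : ℝ) + 1) ^ 2)⁻¹ : ℝ) : ℂ) * f (1 / (x + (n : ℝ) + 1))

namespace GKWAux

/-- The map `x ↦ (x+n+1)⁻¹`. -/
noncomputable def φ (n : ℕ) (x : ℝ) : ℝ := (x + (n : ℝ) + 1)⁻¹

lemma pos_aux (n : ℕ) {x : ℝ} (hx : x ∈ Set.Icc (0:ℝ) 1) : 0 < x + (n : ℝ) + 1 := by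
  have := hx.1
  have : (0:ℝ) ≤ (n:ℝ) := Nat.cast_nonneg n
  linarith [hx.1]

lemma hasDeriv (n : ℕ) {x : ℝ} (hx : x ∈ Set.Icc (0:ℝ) 1) :
    HasDerivWithinAt (φ n) (-(((x + (n : ℝ) + 1) ^ 2)⁻¹)) (Set.Icc 0 1) x := by
  have h0 : x + (n : ℝ) + 1 ≠ 0 := (pos_aux n hx).ne'
  have h : HasDerivAt (fun x : ℝ => (x + (n : ℝ) + 1)⁻¹)
      (-(1 : ℝ) / (x + (n : ℝ) + 1) ^ 2) x := by
    have h1 : HasDerivAt (fun x : ℝ => x + (n : ℝ) + 1) 1 x := by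
      simpa using ((hasDerivAt_id x).add_const ((n : ℝ))).add_const 1
    exact h1.inv h0
  have := h.hasDerivWithinAt (s := Set.Icc (0:ℝ) 1)
  convert this using 1
  all_goals first | rfl | ring

lemma injOn (n : ℕ) : Set.InjOn (φ n) (Set.Icc (0:ℝ) 1) := by
  intro a ha b hb hab
  have := inv_inj.mp hab
  linarith

lemma image_eq (n : ℕ) :
    φ n '' Set.Icc (0:ℝ) 1 = Set.Icc (((n : ℝ) + 2)⁻¹) (((n : ℝ) + 1)⁻¹) := by
  ext y
  constructor
  · rintro ⟨x, hx, rfl⟩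
    have h1 : (0:ℝ) < (n:ℝ) + 1 := by positivity
    constructor
    · exact inv_anti₀ (pos_aux n hx) (by linarith [hx.2])
    · exact inv_anti₀ h1 (by linarith [hx.1])
  · rintro ⟨h1, h2⟩
    have hy : 0 < y := lt_of_lt_of_le (by positivity) h1
    refine ⟨y⁻¹ - (n : ℝ) - 1, ⟨?_, ?_⟩, ?_⟩
    · have : (n:ℝ) + 1 ≤ y⁻¹ := (le_inv_comm₀ hy (by positivity)).mp h2
      linarith
    · have : y⁻¹ ≤ (n:ℝ) + 2 := by
        rw [← inv_inv ((n:ℝ) + 2)]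
        exact inv_anti₀ (inv_pos.mpr (by positivity)) h1
      linarith
    · have hy2 : y⁻¹ - (n:ℝ) - 1 + (n:ℝ) + 1 = y⁻¹ := by ring
      rw [φ, hy2, inv_inv]

lemma subset_Icc (n : ℕ) :
    Set.Icc (((n : ℝ) + 2)⁻¹) (((n : ℝ) + 1)⁻¹) ⊆ Set.Icc (0:ℝ) 1 := by
  intro y hy
  refine ⟨le_trans (by positivity) hy.1, le_trans hy.2 ?_⟩
  rw [← inv_one]
  exact inv_anti₀ one_pos (by push_cast; linarith [Nat.cast_nonneg (α := ℝ) n])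

lemma abs_deriv (n : ℕ) (x : ℝ) :
    |(-(((x + (n : ℝ) + 1) ^ 2)⁻¹))| = ((x + (n : ℝ) + 1) ^ 2)⁻¹ := by
  rw [abs_neg, abs_inv, abs_sq]

/-- Change of variables. -/
lemma cov {E : Type*} [NormedAddCommGroup E] [NormedSpace ℝ E] (n : ℕ) (g : ℝ → E) :
    ∫ u in Set.Icc (((n : ℝ) + 2)⁻¹) (((n : ℝ) + 1)⁻¹), g u
      = ∫ x in Set.Icc (0:ℝ) 1, (((x + (n : ℝ) + 1) ^ 2)⁻¹) • g ((x + (n : ℝ) + 1)⁻¹) := by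
  rw [← image_eq n,
    integral_image_eq_integral_abs_deriv_smul measurableSet_Icc (fun x hx => hasDeriv n hx)
      (injOn n) g]
  refine setIntegral_congr_fun measurableSet_Icc (fun x _ => ?_)
  beta_reduce
  rw [abs_deriv]
  rfl

lemma cov_integrable (n : ℕ) {g : ℝ → ℂ} (hg : IntegrableOn g (Set.Icc (0:ℝ) 1)) :
    IntegrableOn (fun x => (((x + (n : ℝ) + 1) ^ 2)⁻¹) • g ((x + (n : ℝ) + 1)⁻¹))
      (Set.Icc (0:ℝ) 1) := by
  have h := (integrableOn_image_iff_integrableOn_abs_deriv_smul measurableSet_Icc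
      (fun x hx => hasDeriv n hx) (injOn n) g).mp ?_
  · refine h.congr_fun (fun x _ => ?_) measurableSet_Icc
    beta_reduce
    rw [abs_deriv]
    rfl
  · rw [image_eq n]
    exact hg.mono_set (subset_Icc n)

lemma iUnion_Ioc :
    (⋃ n : ℕ, Set.Ioc (((n : ℝ) + 2)⁻¹) (((n : ℝ) + 1)⁻¹)) = Set.Ioc (0:ℝ) 1 := by
  ext x
  simp only [Set.mem_iUnion, Set.mem_Ioc]
  constructor
  · rintro ⟨n, h1, h2⟩
    refine ⟨lt_of_le_of_lt (by positivity) h1, le_trans h2 ?_⟩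
    rw [← inv_one]
    exact inv_anti₀ one_pos (by push_cast; linarith [Nat.cast_nonneg (α := ℝ) n])
  · rintro ⟨hx0, hx1⟩
    have hxi : (1:ℝ) ≤ x⁻¹ := (one_le_inv₀ hx0).mpr hx1
    set k := ⌊x⁻¹⌋₊ with hk
    have hk1 : 1 ≤ k := Nat.le_floor (by simpa using hxi)
    refine ⟨k - 1, ?_, ?_⟩
    · have hck : ((k - 1 : ℕ) : ℝ) = (k : ℝ) - 1 := by
        push_cast [hk1]; ring
      rw [hck]
      have hlt : x⁻¹ < (k : ℝ) + 1 := Nat.lt_floor_add_one _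
      have : x⁻¹ < (k : ℝ) - 1 + 2 := by linarith
      rw [← inv_inv x]
      exact inv_strictAnti₀ (by positivity) this
    · have hck : ((k - 1 : ℕ) : ℝ) = (k : ℝ) - 1 := by
        push_cast [hk1]; ring
      rw [hck]
      have hle : (k : ℝ) ≤ x⁻¹ := Nat.floor_le (by positivity)
      have h3 : (k : ℝ) - 1 + 1 ≤ x⁻¹ := by linarith
      exact (le_inv_comm₀ hx0 (by linarith)).mpr h3
  -- note: careful with the direction above

lemma pairwise_disjoint :
    Pairwise (Function.onFun Disjoint
      (fun n : ℕ => Set.Ioc (((n : ℝ) + 2)⁻¹) (((n : ℝ) + 1)⁻¹))) := by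
  intro m n hmn
  rw [Function.onFun, Set.Ioc_disjoint_Ioc]
  rcases (Ne.lt_or_gt hmn) with h | h
  · have hc : ((m:ℝ)) + 1 ≤ (n:ℝ) := by exact_mod_cast Nat.succ_le_of_lt h
    refine le_trans (min_le_right _ _) (le_trans ?_ (le_max_left _ _))
    exact inv_anti₀ (by positivity) (by linarith)
  · have hc : ((n:ℝ)) + 1 ≤ (m:ℝ) := by exact_mod_cast Nat.succ_le_of_lt h
    refine le_trans (min_le_left _ _) (le_trans ?_ (le_max_right _ _))
    exact inv_anti₀ (by positivity) (by linarith)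

end GKWAux

theorem transferOp_wellDefined_L1 (f : ℝ → ℂ)
    (hf : IntegrableOn f (Set.Icc (0:ℝ) 1)) :
    (∀ᵐ x ∂(volume.restrict (Set.Icc (0:ℝ) 1)),
        Summable fun n : ℕ =>
          ‖((((x + (n : ℝ) + 1) ^ 2)⁻¹ : ℝ) : ℂ) * f (1 / (x + (n : ℝ) + 1))‖) ∧
    IntegrableOn (transferOp f) (Set.Icc (0:ℝ) 1) ∧
    (∫ x in Set.Icc (0:ℝ) 1, ‖transferOp f x‖) ≤ (∫ x in Set.Icc (0:ℝ) 1, ‖f x‖) ∧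
    (∫ x in Set.Icc (0:ℝ) 1, transferOp f x) = ∫ x in Set.Icc (0:ℝ) 1, f x := by
  set μ : Measure ℝ := volume.restrict (Set.Icc (0:ℝ) 1) with hμ
  set G : ℕ → ℝ → ℂ :=
    fun n x => ((((x + (n:ℝ) + 1) ^ 2)⁻¹ : ℝ)) • f ((x + (n:ℝ) + 1)⁻¹) with hG
  have hFG : ∀ (n : ℕ) (x : ℝ),
      ((((x + (n : ℝ) + 1) ^ 2)⁻¹ : ℝ) : ℂ) * f (1 / (x + (n : ℝ) + 1)) = G n x := by
    intro n x
    simp only [hG, one_div, Complex.real_smul]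
  have htop : transferOp f = fun x => ∑' n, G n x := by
    funext x
    exact tsum_congr fun n => hFG n x
  have hGint : ∀ n, Integrable (G n) μ := fun n => GKWAux.cov_integrable n hf
  have hGnorm : ∀ (n : ℕ) (x : ℝ),
      ‖G n x‖ = (((x + (n:ℝ) + 1) ^ 2)⁻¹ : ℝ) • ‖f ((x + (n:ℝ) + 1)⁻¹)‖ := by
    intro n x
    simp only [hG, norm_smul, Real.norm_eq_abs,
      abs_of_nonneg (by positivity : (0:ℝ) ≤ ((x + (n:ℝ) + 1) ^ 2)⁻¹), smul_eq_mul]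
  have hnorm_int_eq : ∀ n : ℕ, ∫ x, ‖G n x‖ ∂μ
      = ∫ u in Set.Ioc (((n:ℝ)+2)⁻¹) (((n:ℝ)+1)⁻¹), ‖f u‖ := by
    intro n
    rw [← integral_Icc_eq_integral_Ioc, GKWAux.cov n (fun u => ‖f u‖), hμ]
    exact setIntegral_congr_fun measurableSet_Icc fun x _ => (hGnorm n x)
  have hval_eq : ∀ n : ℕ, ∫ x, G n x ∂μ
      = ∫ u in Set.Ioc (((n:ℝ)+2)⁻¹) (((n:ℝ)+1)⁻¹), f u := by
    intro n
    rw [← integral_Icc_eq_integral_Ioc, GKWAux.cov n f, hμ]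
  have hSumNorm : HasSum (fun n : ℕ => ∫ u in Set.Ioc (((n:ℝ)+2)⁻¹) (((n:ℝ)+1)⁻¹), ‖f u‖)
      (∫ u in Set.Ioc (0:ℝ) 1, ‖f u‖) := by
    have h := hasSum_integral_iUnion (μ := volume)
      (f := fun u => ‖f u‖) (fun n : ℕ => measurableSet_Ioc) GKWAux.pairwise_disjoint
      (by rw [GKWAux.iUnion_Ioc]; exact (hf.mono_set Set.Ioc_subset_Icc_self).norm)
    rwa [GKWAux.iUnion_Ioc] at h
  have hSumVal : HasSum (fun n : ℕ => ∫ u in Set.Ioc (((n:ℝ)+2)⁻¹) (((n:ℝ)+1)⁻¹), f u)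
      (∫ u in Set.Ioc (0:ℝ) 1, f u) := by
    have h := hasSum_integral_iUnion (μ := volume)
      (f := f) (fun n : ℕ => measurableSet_Ioc) GKWAux.pairwise_disjoint
      (by rw [GKWAux.iUnion_Ioc]; exact hf.mono_set Set.Ioc_subset_Icc_self)
    rwa [GKWAux.iUnion_Ioc] at h
  have hnorm_sum : Summable (fun n : ℕ => ∫ x, ‖G n x‖ ∂μ) := by
    rw [funext hnorm_int_eq]
    exact hSumNorm.summable
  have key := hasSum_integral_of_summable_integral_norm (μ := μ) (F := G) hGint hnorm_sum
  -- finiteness of the lintegral sum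
  have h1 : (∑' n : ℕ, ∫⁻ x, ‖G n x‖₊ ∂μ) ≠ ⊤ := by
    have heq : ∀ n : ℕ, ∫⁻ x, ‖G n x‖₊ ∂μ = ENNReal.ofReal (∫ x, ‖G n x‖ ∂μ) := fun n =>
      (ofReal_integral_norm_eq_lintegral_enorm (hGint n)).symm
    rw [funext heq, ← ENNReal.ofReal_tsum_of_nonneg
      (fun n => integral_nonneg fun x => norm_nonneg _) hnorm_sum]
    exact ENNReal.ofReal_ne_top
  have h2 : (∫⁻ x, ∑' n : ℕ, (‖G n x‖₊ : ENNReal) ∂μ) = ∑' n : ℕ, ∫⁻ x, ‖G n x‖₊ ∂μ :=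
    lintegral_tsum fun n => (hGint n).aestronglyMeasurable.enorm
  have h3 : ∀ᵐ x ∂μ, (∑' n : ℕ, (‖G n x‖₊ : ENNReal)) < ⊤ :=
    ae_lt_top' (AEMeasurable.ennreal_tsum fun n => (hGint n).aestronglyMeasurable.enorm)
      (by rw [h2]; exact h1)
  have hsummae : ∀ᵐ x ∂μ, Summable fun n : ℕ => ‖G n x‖ := by
    refine h3.mono fun x hx => ?_
    have := ENNReal.tsum_coe_ne_top_iff_summable_coe.mp hx.ne
    simpa [coe_nnnorm] using this
  -- measurability of the sum
  have hmeas : AEStronglyMeasurable (fun x => ∑' n, G n x) μ := by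
    refine aestronglyMeasurable_of_tendsto_ae (Filter.atTop)
      (f := fun N : ℕ => fun x => ∑ n ∈ Finset.range N, G n x)
      (fun N => Finset.aestronglyMeasurable_fun_sum _ fun n _ => (hGint n).aestronglyMeasurable) ?_
    refine hsummae.mono fun x hx => ?_
    exact (hx.of_norm).hasSum.tendsto_sum_nat
  have hmeasN : AEStronglyMeasurable (fun x => ∑' n, ‖G n x‖) μ := by
    refine aestronglyMeasurable_of_tendsto_ae (Filter.atTop)
      (f := fun N : ℕ => fun x => ∑ n ∈ Finset.range N, ‖G n x‖)
      (fun N => Finset.aestronglyMeasurable_fun_sum _ fun n _ =>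
        (hGint n).aestronglyMeasurable.norm) ?_
    refine hsummae.mono fun x hx => ?_
    exact hx.hasSum.tendsto_sum_nat
  have hbound : Integrable (fun x => ∑' n, ‖G n x‖) μ := by
    refine ⟨hmeasN, ?_⟩
    show (∫⁻ x, (‖∑' n, ‖G n x‖‖₊ : ENNReal) ∂μ) < ⊤
    have hle : ∀ᵐ x ∂μ, (‖∑' n, ‖G n x‖‖₊ : ENNReal) ≤ ∑' n : ℕ, (‖G n x‖₊ : ENNReal) := by
      refine hsummae.mono fun x hx => le_of_eq ?_
      calc (‖∑' n, ‖G n x‖‖₊ : ENNReal)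
          = ENNReal.ofReal (∑' n, ‖G n x‖) := by
            rw [show ((‖∑' n, ‖G n x‖‖₊ : NNReal) : ENNReal) = ENNReal.ofReal ‖∑' n, ‖G n x‖‖ from
                (ofReal_norm _).symm,
              Real.norm_of_nonneg (tsum_nonneg fun n => norm_nonneg _)]
        _ = ∑' n, ENNReal.ofReal ‖G n x‖ :=
            ENNReal.ofReal_tsum_of_nonneg (fun n => norm_nonneg _) hx
        _ = ∑' n : ℕ, (‖G n x‖₊ : ENNReal) :=
            tsum_congr fun n => ofReal_norm (G n x)
    calc (∫⁻ x, ‖∑' n, ‖G n x‖‖₊ ∂μ) ≤ ∫⁻ x, ∑' n : ℕ, (‖G n x‖₊ : ENNReal) ∂μ :=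
          lintegral_mono_ae hle
      _ = ∑' n : ℕ, ∫⁻ x, ‖G n x‖₊ ∂μ := h2
      _ < ⊤ := h1.lt_top
  have htint : Integrable (fun x => ∑' n, G n x) μ :=
    Integrable.mono' hbound hmeas (hsummae.mono fun x hx => norm_tsum_le_tsum_norm hx)
  refine ⟨?_, ?_, ?_, ?_⟩
  · refine hsummae.mono fun x hx => ?_
    exact (summable_congr fun n => by rw [hFG]).mpr hx
  · rw [htop]
    exact htint
  · rw [htop]
    have step1 : (∫ x, ‖∑' n, G n x‖ ∂μ) ≤ ∫ x, ∑' n, ‖G n x‖ ∂μ :=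
      integral_mono_ae htint.norm hbound (hsummae.mono fun x hx => norm_tsum_le_tsum_norm hx)
    have step2 : (∫ x, ∑' n, ‖G n x‖ ∂μ) = ∑' n, ∫ x, ‖G n x‖ ∂μ := by
      refine (integral_tsum_of_summable_integral_norm (F := fun n x => ‖G n x‖)
        (fun n => (hGint n).norm) ?_).symm
      simpa [norm_norm] using hnorm_sum
    have step3 : (∑' n : ℕ, ∫ x, ‖G n x‖ ∂μ) = ∫ x in Set.Icc (0:ℝ) 1, ‖f x‖ := by
      rw [funext hnorm_int_eq, hSumNorm.tsum_eq, ← integral_Icc_eq_integral_Ioc]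
    calc (∫ x, ‖∑' n, G n x‖ ∂μ) ≤ ∫ x, ∑' n, ‖G n x‖ ∂μ := step1
      _ = ∑' n, ∫ x, ‖G n x‖ ∂μ := step2
      _ = ∫ x in Set.Icc (0:ℝ) 1, ‖f x‖ := step3
  · rw [htop]
    have hSumVal' : HasSum (fun n : ℕ => ∫ x, G n x ∂μ) (∫ x in Set.Icc (0:ℝ) 1, f x) := by
      rw [funext hval_eq, integral_Icc_eq_integral_Ioc]
      exact hSumVal
    exact key.unique hSumVal'
end

section
/- For each positive integer k let h_k : (0,∞) → (0,1) be given by h_k(x) = 1/(x+k). Let a₁,…,a_m be positive integers, and let u, v be coprime positive integers with u < v such that u/v = (h_{a₁} ∘ h_{a₂} ∘ ⋯ ∘ h_{a_m})(0). Then the composition h_{a₁} ∘ ⋯ ∘ h_{a_m} is differentiable at 0 and |(h_{a₁} ∘ ⋯ ∘ h_{a_m})′(0)| = 1/v². -/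
/-- `cfComp [a₁, …, a_m] x = (h_{a₁} ∘ h_{a₂} ∘ ⋯ ∘ h_{a_m})(x)` where `h_k(y) = 1/(y + k)`. -/
noncomputable def cfComp (l : List ℕ) (x : ℝ) : ℝ :=
  l.foldr (fun k y => 1 / (y + (k : ℝ))) x

lemma cfComp_mobius (l : List ℕ) (hl1 : ∀ k ∈ l, 1 ≤ k) :
    ∃ p q r s : ℤ, (p * s - q * r = 1 ∨ p * s - q * r = -1) ∧
      0 ≤ p ∧ 0 ≤ q ∧ 0 ≤ r ∧ 1 ≤ s ∧
      (∀ᶠ x in nhds (0 : ℝ), cfComp l x = ((p : ℝ) * x + q) / ((r : ℝ) * x + s)) := by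
  induction l with
  | nil =>
    refine ⟨1, 0, 0, 1, Or.inl (by ring), by norm_num, by norm_num, by norm_num, le_refl _,
      Filter.Eventually.of_forall fun x => ?_⟩
    simp [cfComp]
  | cons k l ih =>
    obtain ⟨p, q, r, s, hdet, hp, hq, hr, hs, hev⟩ := ih (fun a ha => hl1 a (List.mem_cons_of_mem _ ha))
    have hk : 1 ≤ k := hl1 k List.mem_cons_self
    refine ⟨r, s, p + k * r, q + k * s, ?_, hr, le_trans zero_le_one hs, ?_, ?_, ?_⟩
    · rcases hdet with h | h
      · exact Or.inr (by push_cast; linarith [h])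
      · exact Or.inl (by push_cast; linarith [h])
    · positivity
    · have : (1 : ℤ) ≤ (k : ℤ) * s := by
        calc (1:ℤ) = 1 * 1 := by ring
        _ ≤ (k : ℤ) * s := by
          apply mul_le_mul (by exact_mod_cast hk) hs zero_le_one (by exact_mod_cast Nat.zero_le k)
      linarith
    · have hs0 : ((r : ℝ) * 0 + s) ≠ 0 := by
        have : (1 : ℝ) ≤ (s : ℝ) := by exact_mod_cast hs
        simp; linarith
    -- eventual nonvanishing of both denominators
      have hc1 : ContinuousAt (fun x : ℝ => (r : ℝ) * x + s) 0 := by fun_prop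
      have h1 : ∀ᶠ x in nhds (0 : ℝ), (r : ℝ) * x + s ≠ 0 := hc1.eventually_ne hs0
      have hs0' : (((p : ℝ) + k * r) * 0 + ((q : ℝ) + k * s)) ≠ 0 := by
        have h1' : (1 : ℤ) ≤ q + k * s := by
          have hk' : (1 : ℤ) ≤ (k : ℤ) := by exact_mod_cast hk
          nlinarith
        have : (1 : ℝ) ≤ (q : ℝ) + k * s := by exact_mod_cast h1'
        simp; push_cast; linarith
      have hc2 : ContinuousAt (fun x : ℝ => ((p : ℝ) + k * r) * x + ((q : ℝ) + k * s)) 0 := by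
        fun_prop
      have h2 : ∀ᶠ x in nhds (0 : ℝ),
          ((p : ℝ) + k * r) * x + ((q : ℝ) + k * s) ≠ 0 := hc2.eventually_ne hs0'
      filter_upwards [hev, h1, h2] with x hx hx1 hx2
      have : cfComp (k :: l) x = 1 / (cfComp l x + k) := rfl
      rw [this, hx]
      push_cast
      rw [div_add' _ _ _ hx1, one_div_div]
      congr 1
      ring

theorem cfComp_deriv_at_zero (l : List ℕ) (hl : l ≠ []) (hl1 : ∀ k ∈ l, 1 ≤ k)
    (u v : ℕ) (hu : 0 < u) (huv : u < v) (hcop : Nat.gcd u v = 1)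
    (hval : (u : ℝ) / (v : ℝ) = cfComp l 0) :
    DifferentiableAt ℝ (cfComp l) 0 ∧ |deriv (cfComp l) 0| = 1 / (v : ℝ) ^ 2 := by
  obtain ⟨p, q, r, s, hdet, hp, hq, hr, hs, hev⟩ := cfComp_mobius l hl1
  have hsR : (1 : ℝ) ≤ (s : ℝ) := by exact_mod_cast hs
  have hs0 : ((r : ℝ) * 0 + s) ≠ 0 := by simp; linarith
  have h1 : HasDerivAt (fun x : ℝ => (p : ℝ) * x + q) p 0 := by
    simpa using ((hasDerivAt_id (0 : ℝ)).const_mul (p : ℝ)).add_const (q : ℝ)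
  have h2 : HasDerivAt (fun x : ℝ => (r : ℝ) * x + s) r 0 := by
    simpa using ((hasDerivAt_id (0 : ℝ)).const_mul (r : ℝ)).add_const (s : ℝ)
  have hg : HasDerivAt (fun x : ℝ => ((p : ℝ) * x + q) / ((r : ℝ) * x + s))
      (((p : ℝ) * s - q * r) / (s : ℝ) ^ 2) 0 := by
    have := h1.fun_div h2 hs0
    simpa using this
  have heq : cfComp l =ᶠ[nhds (0 : ℝ)] fun x => ((p : ℝ) * x + q) / ((r : ℝ) * x + s) := hev
  have hdiff : DifferentiableAt ℝ (cfComp l) 0 :=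
    (heq.differentiableAt_iff).mpr hg.differentiableAt
  have hderiv : deriv (cfComp l) 0 = ((p : ℝ) * s - q * r) / (s : ℝ) ^ 2 := by
    rw [heq.deriv_eq, hg.deriv]
  -- value at 0
  have hval0 : (u : ℝ) / v = (q : ℝ) / s := by
    have := heq.eq_of_nhds
    simp only [mul_zero, zero_add] at this
    rw [hval, this]
  -- show s = v
  have hvR : (0 : ℝ) < (v : ℝ) := by exact_mod_cast hu.trans huv
  have hcross : (u : ℤ) * s = q * v := by
    have : (u : ℝ) * s = q * v := by
      field_simp at hval0
      linarith [hval0]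
    exact_mod_cast this
  have hcopuv : IsCoprime (u : ℤ) (v : ℤ) := by
    rw [Nat.isCoprime_iff_coprime]; exact hcop
  have hcopqs : IsCoprime (q : ℤ) s := by
    rcases hdet with h | h
    · exact ⟨-r, p, by linarith [h]⟩
    · exact ⟨r, -p, by linarith [h]⟩
  have hvs : (v : ℤ) ∣ s := by
    have hdv : (v : ℤ) ∣ u * s := ⟨q, by linarith [hcross]⟩
    exact (hcopuv.symm.dvd_of_dvd_mul_left hdv)
  have hsv : s ∣ (v : ℤ) := by
    have hds : s ∣ q * v := ⟨u, by linarith [hcross]⟩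
    exact (hcopqs.symm.dvd_of_dvd_mul_left hds)
  have hseq : s = (v : ℤ) := Int.dvd_antisymm (by linarith) (by exact_mod_cast Nat.zero_le v) hsv hvs
  refine ⟨hdiff, ?_⟩
  rw [hderiv, abs_div]
  have hnum : |(p : ℝ) * s - q * r| = 1 := by
    rcases hdet with h | h
    · have : (p : ℝ) * s - q * r = 1 := by exact_mod_cast congrArg (Int.cast : ℤ → ℝ) h
      rw [this, abs_one]
    · have : (p : ℝ) * s - q * r = -1 := by exact_mod_cast congrArg (Int.cast : ℤ → ℝ) h
      rw [this]; norm_num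
  rw [hnum, abs_of_nonneg (by positivity)]
  have : (s : ℝ) = (v : ℝ) := by exact_mod_cast hseq
  rw [this]
end
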